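/- Let f : ℝ → ℝ be 1-periodic, integrable on [0,1), with ∫₀¹ f(x)dx = 0, let n be a positive integer and m a natural number, and let 𝒢_m denote the σ-algebra on [0,1) generated by the dyadic intervals [v/2^m, (v+1)/2^m), v = 0, …, 2^m − 1. Then Lebesgue-almost everywhere |𝔼[f(n·) | 𝒢_m](x)| ≤ (2^m/n)·∫₀¹ |f(t)| dt. -/

import Mathlib

open MeasureTheory Set

/-- The σ-algebra on ℝ generated by the dyadic intervals [v/2^m, (v+1)/2^m), v = 0,…,2^m − 1. -/
def dyadicSigma (m : ℕ) : MeasurableSpace ℝ :=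
  MeasurableSpace.generateFrom
    {s : Set ℝ | ∃ v : ℕ, v < 2 ^ m ∧ s = Set.Ico ((v : ℝ) / 2 ^ m) (((v : ℝ) + 1) / 2 ^ m)}


lemma per_intervalIntegrable {f : ℝ → ℝ} (hper : Function.Periodic f 1)
    (h01 : IntervalIntegrable f volume 0 1) (a b : ℝ) :
    IntervalIntegrable f volume a b := by
  have hk : ∀ k : ℤ, IntervalIntegrable f volume k (k + 1) := by
    intro k
    have h := h01.comp_add_right (-(k : ℝ))
    have heq : (fun x : ℝ => f (x + -(k : ℝ))) = f := by
      funext x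
      have := hper.sub_int_mul_eq (x := x) (n := k)
      simpa [sub_eq_add_neg] using this
    rw [heq] at h
    simpa [sub_neg_eq_add, add_comm] using h
  have hN : ∀ N : ℕ, IntervalIntegrable f volume (-(N : ℝ)) N := by
    intro N
    induction N with
    | zero => simp
    | succ N ih =>
      have h1 : IntervalIntegrable f volume (-(N : ℝ) - 1) (-(N : ℝ)) := by
        have h := hk (-(N : ℤ) - 1)
        have e1 : ((-(N : ℤ) - 1 : ℤ) : ℝ) = -(N : ℝ) - 1 := by push_cast; ring
        have e2 : ((-(N : ℤ) - 1 : ℤ) : ℝ) + 1 = -(N : ℝ) := by push_cast; ring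
        rwa [e2, e1] at h
      have h2 : IntervalIntegrable f volume (N : ℝ) ((N : ℝ) + 1) := by
        have h := hk (N : ℤ)
        have e1 : ((N : ℤ) : ℝ) = (N : ℝ) := by push_cast; ring
        rwa [e1] at h
      have h3 := (h1.trans ih).trans h2
      have e3 : -((N : ℝ) + 1) = -(N : ℝ) - 1 := by ring
      push_cast
      rw [e3]
      exact h3
  obtain ⟨N, hNa⟩ := exists_nat_ge (max |a| |b|)
  refine (hN N).mono_set ?_
  have ha : |a| ≤ N := le_trans (le_max_left _ _) hNa
  have hb : |b| ≤ N := le_trans (le_max_right _ _) hNa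
  rw [abs_le] at ha hb
  rw [Set.uIcc_of_le (by linarith [ (0:ℝ) ] : -(N:ℝ) ≤ N)]
  exact Set.uIcc_subset_Icc ⟨ha.1, ha.2⟩ ⟨hb.1, hb.2⟩

lemma per_integral_bound {f : ℝ → ℝ} (hper : Function.Periodic f 1)
    (hii : ∀ a b : ℝ, IntervalIntegrable f volume a b)
    (hmean : ∫ x in (0:ℝ)..1, f x = 0) {A B : ℝ} (hAB : A ≤ B) :
    |∫ x in A..B, f x| ≤ ∫ x in (0:ℝ)..1, |f x| := by
  set k : ℤ := ⌊B - A⌋ with hkdef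
  have hkle : A + (k : ℝ) ≤ B := by
    have := Int.floor_le (B - A); simp only [hkdef]; linarith
  have hklt : B ≤ A + (k : ℝ) + 1 := by
    have := Int.lt_floor_add_one (B - A); simp only [hkdef]; linarith
  have hsplit : ∫ x in A..B, f x = (∫ x in A..(A + (k:ℝ)), f x) + ∫ x in (A + (k:ℝ))..B, f x :=
    (intervalIntegral.integral_add_adjacent_intervals (hii _ _) (hii _ _)).symm
  have h1 : (∫ x in A..(A + (k:ℝ)), f x) = 0 := by
    have hz := hper.intervalIntegral_add_zsmul_eq k A hii
    have he : A + k • (1:ℝ) = A + (k:ℝ) := by simp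
    rw [he] at hz
    rw [hz]
    have h2 := hper.intervalIntegral_add_eq A 0
    rw [h2]
    simp [hmean]
  have habs : Function.Periodic (fun x => |f x|) 1 := fun x => by simp [hper x]
  have h3 : |∫ x in (A + (k:ℝ))..B, f x| ≤ ∫ x in (A + (k:ℝ))..B, |f x| :=
    intervalIntegral.abs_integral_le_integral_abs hkle
  have h4 : (∫ x in (A + (k:ℝ))..B, |f x|) ≤ ∫ x in (A + (k:ℝ))..(A + (k:ℝ) + 1), |f x| := by
    refine intervalIntegral.integral_mono_interval le_rfl hkle hklt ?_ ((hii _ _).abs)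
    filter_upwards with x using abs_nonneg _
  have h5 : (∫ x in (A + (k:ℝ))..(A + (k:ℝ) + 1), |f x|) = ∫ x in (0:ℝ)..1, |f x| := by
    have := habs.intervalIntegral_add_eq (A + (k:ℝ)) 0
    simpa using this
  calc |∫ x in A..B, f x| = |∫ x in (A + (k:ℝ))..B, f x| := by rw [hsplit, h1, zero_add]
    _ ≤ _ := h3.trans (h4.trans_eq h5)

theorem condexp_dyadic_bound
    (f : ℝ → ℝ) (hper : ∀ x : ℝ, f (x + 1) = f x)
    (hint : IntegrableOn f (Set.Ico (0:ℝ) 1))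
    (hmean : ∫ x in Set.Ico (0:ℝ) 1, f x = 0)
    (n : ℕ) (hn : 0 < n) (m : ℕ) :
    ∀ᵐ x ∂(volume.restrict (Set.Ico (0:ℝ) 1)),
      abs (((volume.restrict (Set.Ico (0:ℝ) 1))[(fun t => f ((n : ℝ) * t)) | dyadicSigma m]) x)
        ≤ ((2 : ℝ) ^ m / (n : ℝ)) * ∫ t in Set.Ico (0:ℝ) 1, |f t| := by
  have hnR : (0:ℝ) < (n:ℝ) := by exact_mod_cast hn
  have h2m : (0:ℝ) < (2:ℝ)^m := by positivity
  set μ : Measure ℝ := volume.restrict (Set.Ico (0:ℝ) 1) with hμ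
  set F : ℝ → ℝ := fun t => f ((n : ℝ) * t) with hF
  set I : ℕ → Set ℝ := fun v => Set.Ico ((v : ℝ) / 2 ^ m) (((v : ℝ) + 1) / 2 ^ m) with hI
  set c : ℕ → ℝ := fun v => (2:ℝ)^m * ∫ t in ((v:ℝ)/2^m)..(((v:ℝ)+1)/2^m), F t with hc
  set g : ℝ → ℝ := fun x => ∑ v ∈ Finset.range (2^m), (I v).indicator (fun _ => c v) x with hg
  -- basic facts about f
  have hperiodic : Function.Periodic f 1 := hper
  have h01 : IntervalIntegrable f volume 0 1 :=
    (intervalIntegrable_iff_integrableOn_Ico_of_le zero_le_one).2 hint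
  have hii : ∀ a b : ℝ, IntervalIntegrable f volume a b :=
    per_intervalIntegrable hperiodic h01
  have hIcoIoc : ∀ h : ℝ → ℝ, (∫ x in Set.Ico (0:ℝ) 1, h x) = ∫ x in (0:ℝ)..1, h x := by
    intro h
    rw [intervalIntegral.integral_of_le zero_le_one, integral_Ico_eq_integral_Ioo,
      ← integral_Ioc_eq_integral_Ioo]
  have hmean0 : ∫ x in (0:ℝ)..1, f x = 0 := by rw [← hIcoIoc]; exact hmean
  have habs0 : (∫ t in Set.Ico (0:ℝ) 1, |f t|) = ∫ x in (0:ℝ)..1, |f x| := hIcoIoc _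
  -- key bound
  have hA : ∀ a b : ℝ, a ≤ b → |∫ t in a..b, F t| ≤ (1/(n:ℝ)) * ∫ x in (0:ℝ)..1, |f x| := by
    intro a b hab
    rw [hF]
    rw [intervalIntegral.integral_comp_mul_left f (ne_of_gt hnR)]
    rw [smul_eq_mul, abs_mul, abs_inv, abs_of_nonneg hnR.le, one_div]
    refine mul_le_mul_of_nonneg_left ?_ (by positivity)
    exact per_integral_bound hperiodic hii hmean0
      (mul_le_mul_of_nonneg_left hab hnR.le)
  -- integrability of F
  have hFii : IntervalIntegrable F volume 0 1 := by
    have h := (hii 0 (n:ℝ)).comp_mul_left (c := (n:ℝ))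
    rw [zero_div, div_self (ne_of_gt hnR)] at h
    exact h
  have hFico : IntegrableOn F (Set.Ico (0:ℝ) 1) volume :=
    (intervalIntegrable_iff_integrableOn_Ico_of_le zero_le_one).1 hFii
  have hFμ : Integrable F μ := hFico
  -- atoms
  have hIsub : ∀ v : ℕ, v < 2^m → I v ⊆ Set.Ico (0:ℝ) 1 := by
    intro v hv
    apply Set.Ico_subset_Ico
    · positivity
    · rw [div_le_one h2m]
      have : (v:ℝ) + 1 ≤ ((2:ℝ))^m := by exact_mod_cast Nat.succ_le_of_lt hv
      simpa using this
  have hdisj : ∀ v w : ℕ, v ≠ w → Disjoint (I v) (I w) := by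
    intro v w hvw
    rw [Set.disjoint_left]
    intro x hxv hxw
    simp only [hI, Set.mem_Ico] at hxv hxw
    have h1 : (v:ℝ) < (w:ℝ) + 1 := by
      have := lt_of_le_of_lt hxv.1 hxw.2
      rwa [div_lt_div_iff₀ h2m h2m, mul_lt_mul_iff_of_pos_right h2m] at this
    have h2 : (w:ℝ) < (v:ℝ) + 1 := by
      have := lt_of_le_of_lt hxw.1 hxv.2
      rwa [div_lt_div_iff₀ h2m h2m, mul_lt_mul_iff_of_pos_right h2m] at this
    have h1' : v < w + 1 := by exact_mod_cast h1
    have h2' : w < v + 1 := by exact_mod_cast h2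
    exact hvw (by omega)
  have hmem : ∀ x ∈ Set.Ico (0:ℝ) 1, ∃ v : ℕ, v < 2^m ∧ x ∈ I v := by
    intro x hx
    obtain ⟨hx0, hx1⟩ := hx
    refine ⟨⌊(2:ℝ)^m * x⌋₊, ?_, ?_, ?_⟩
    · rw [Nat.floor_lt (by positivity)]
      calc (2:ℝ)^m * x < (2:ℝ)^m * 1 := by
            exact mul_lt_mul_of_pos_left hx1 h2m
        _ = ((2^m : ℕ) : ℝ) := by push_cast; ring
    · rw [div_le_iff₀ h2m, mul_comm]
      exact Nat.floor_le (by positivity)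
    · rw [lt_div_iff₀ h2m, mul_comm]
      exact Nat.lt_floor_add_one _
  have hcover : Set.Ico (0:ℝ) 1 = ⋃ v ∈ Finset.range (2^m), I v := by
    apply Set.Subset.antisymm
    · intro x hx
      obtain ⟨v, hv, hxv⟩ := hmem x hx
      exact Set.mem_biUnion (Finset.mem_range.2 hv) hxv
    · exact Set.iUnion₂_subset fun v hv => hIsub v (Finset.mem_range.1 hv)
  -- measurability
  have hle : dyadicSigma m ≤ (inferInstance : MeasurableSpace ℝ) := by
    apply MeasurableSpace.generateFrom_le
    rintro s ⟨v, hv, rfl⟩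
    exact measurableSet_Ico
  have hImeas : ∀ v : ℕ, v < 2^m → MeasurableSet[dyadicSigma m] (I v) := by
    intro v hv
    exact MeasurableSpace.measurableSet_generateFrom ⟨v, hv, rfl⟩
  haveI : IsFiniteMeasure μ := by
    constructor
    rw [hμ, Measure.restrict_apply_univ]
    exact measure_Ico_lt_top
  -- integrability of g
  have hgμ : Integrable g μ := by
    apply integrable_finset_sum
    intro v _
    rw [integrable_indicator_iff measurableSet_Ico]
    exact integrableOn_const (measure_lt_top μ _).ne
  -- volume of atoms
  have hIvol : ∀ v : ℕ, volume (I v) = ENNReal.ofReal ((1:ℝ)/2^m) := by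
    intro v
    rw [hI]
    simp only [Real.volume_Ico]
    congr 1
    field_simp
    ring
  -- value of g on atoms
  have hgval : ∀ (x : ℝ) (v : ℕ), v < 2^m → x ∈ I v → g x = c v := by
    intro x v hv hxv
    simp only [hg]
    rw [Finset.sum_eq_single_of_mem v (Finset.mem_range.2 hv)]
    · exact Set.indicator_of_mem hxv _
    · intro w _ hwv
      exact Set.indicator_of_notMem
        (fun hxw => (hdisj w v hwv).le_bot ⟨hxw, hxv⟩) _
  -- atom integrals over volume
  have hatomv : ∀ v : ℕ, v < 2^m →
      (∫ x in I v, g x) = ∫ x in I v, F x := by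
    intro v hv
    have hrhs : (∫ x in I v, F x) = ∫ t in ((v:ℝ)/2^m)..(((v:ℝ)+1)/2^m), F t := by
      rw [intervalIntegral.integral_of_le (by
        rw [div_le_div_iff₀ h2m h2m, mul_le_mul_iff_of_pos_right h2m]; linarith)]
      rw [hI]
      rw [integral_Ico_eq_integral_Ioo, ← integral_Ioc_eq_integral_Ioo]
    have hlhs : (∫ x in I v, g x) = (1/2^m) * c v := by
      simp only [hg]
      rw [integral_finset_sum]
      · rw [Finset.sum_eq_single_of_mem v (Finset.mem_range.2 hv)]
        · rw [setIntegral_indicator measurableSet_Ico, Set.inter_self,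
            setIntegral_const, measureReal_def, hIvol, smul_eq_mul, ENNReal.toReal_ofReal (by positivity)]
        · intro w _ hwv
          rw [setIntegral_indicator measurableSet_Ico,
            Set.disjoint_iff_inter_eq_empty.1 (hdisj v w fun h => hwv h.symm)]
          simp
      · intro w _
        rw [integrable_indicator_iff measurableSet_Ico]
        exact integrableOn_const (lt_of_le_of_lt (Measure.restrict_apply_le _ _)
          (by rw [hIvol]; exact ENNReal.ofReal_lt_top)).ne
    rw [hlhs, hrhs]
    simp only [hc]
    field_simp
  -- reduce μ-set-integrals over subsets of [0,1) to volume ones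
  have hres : ∀ (h : ℝ → ℝ) (s : Set ℝ), MeasurableSet s → s ⊆ Set.Ico (0:ℝ) 1 →
      (∫ x in s, h x ∂μ) = ∫ x in s, h x := by
    intro h s hs hsub
    rw [hμ, Measure.restrict_restrict hs, Set.inter_eq_self_of_subset_left hsub]
  -- total integral equality
  have htotal : (∫ x, g x ∂μ) = ∫ x, F x ∂μ := by
    have hgt : (∫ x, g x ∂μ) = ∫ x in Set.Ico (0:ℝ) 1, g x := by rw [hμ]
    have hft : (∫ x, F x ∂μ) = ∫ x in Set.Ico (0:ℝ) 1, F x := by rw [hμ]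
    rw [hgt, hft, hcover,
      integral_biUnion_finset _ (fun v _ => measurableSet_Ico)
        (fun v _ w _ hvw => hdisj v w hvw)
        (fun v hv => IntegrableOn.mono_set hgμ (hIsub v (Finset.mem_range.1 hv))),
      integral_biUnion_finset _ (fun v _ => measurableSet_Ico)
        (fun v _ w _ hvw => hdisj v w hvw)
        (fun v hv => hFico.mono_set (hIsub v (Finset.mem_range.1 hv)))]
    exact Finset.sum_congr rfl fun v hv => hatomv v (Finset.mem_range.1 hv)
  -- Dynkin: set-integral equality on all of dyadicSigma
  have hpi : IsPiSystem {s : Set ℝ | ∃ v : ℕ, v < 2 ^ m ∧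
      s = Set.Ico ((v : ℝ) / 2 ^ m) (((v : ℝ) + 1) / 2 ^ m)} := by
    rintro s ⟨v, hv, rfl⟩ t ⟨w, hw, rfl⟩ hne
    rcases eq_or_ne v w with rfl | hvw
    · rw [Set.inter_self]; exact ⟨v, hv, rfl⟩
    · exact absurd (Set.disjoint_iff_inter_eq_empty.1 (hdisj v w hvw)) (by
        intro h; rw [hI] at h; simp only at h
        exact hne.ne_empty h)
  have hC : ∀ t : Set ℝ, MeasurableSet[dyadicSigma m] t →
      (∫ x in t, g x ∂μ) = ∫ x in t, F x ∂μ := by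
    have := @MeasurableSpace.induction_on_inter ℝ (dyadicSigma m)
      (fun t _ => (∫ x in t, g x ∂μ) = ∫ x in t, F x ∂μ)
      {s : Set ℝ | ∃ v : ℕ, v < 2 ^ m ∧
        s = Set.Ico ((v : ℝ) / 2 ^ m) (((v : ℝ) + 1) / 2 ^ m)}
      rfl hpi (by simp) ?_ ?_ ?_
    · exact fun t ht => this t ht
    · rintro t ⟨v, hv, rfl⟩
      rw [hres g _ measurableSet_Ico (hIsub v hv), hres F _ measurableSet_Ico (hIsub v hv)]
      exact hatomv v hv
    · intro t ht hCt
      have ht' : MeasurableSet t := hle _ ht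
      have h1 := integral_add_compl ht' hgμ
      have h2 := integral_add_compl ht' hFμ
      rw [← htotal] at h2
      linarith
    · intro u hu hmeasu hCu
      rw [integral_iUnion (fun i => hle _ (hmeasu i)) hu hgμ.integrableOn,
        integral_iUnion (fun i => hle _ (hmeasu i)) hu hFμ.integrableOn]
      exact tsum_congr hCu
  -- g is the conditional expectation
  have hgm : AEStronglyMeasurable[dyadicSigma m] g μ := by
    refine StronglyMeasurable.aestronglyMeasurable ?_
    refine Measurable.stronglyMeasurable ?_
    refine Finset.measurable_sum _ fun v hv => ?_
    exact Measurable.indicator (@measurable_const _ _ _ (dyadicSigma m) _)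
      (hImeas v (Finset.mem_range.1 hv))
  have hcond : g =ᵐ[μ] μ[F | dyadicSigma m] :=
    ae_eq_condExp_of_forall_setIntegral_eq hle hFμ
      (fun s _ _ => hgμ.integrableOn) (fun s hs _ => hC s hs) hgm
  -- conclude
  filter_upwards [hcond, ae_restrict_mem measurableSet_Ico] with x hx hxmem
  rw [← hx]
  obtain ⟨v, hv, hxv⟩ := hmem x hxmem
  rw [hgval x v hv hxv]
  have hab : (v:ℝ)/2^m ≤ ((v:ℝ)+1)/2^m := by
    rw [div_le_div_iff₀ h2m h2m, mul_le_mul_iff_of_pos_right h2m]; linarith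
  calc |c v| = (2:ℝ)^m * |∫ t in ((v:ℝ)/2^m)..(((v:ℝ)+1)/2^m), F t| := by
        simp only [hc]; rw [abs_mul, abs_of_pos h2m]
    _ ≤ (2:ℝ)^m * ((1/(n:ℝ)) * ∫ x in (0:ℝ)..1, |f x|) :=
        mul_le_mul_of_nonneg_left (hA _ _ hab) h2m.le
    _ = ((2:ℝ)^m / (n:ℝ)) * ∫ t in Set.Ico (0:ℝ) 1, |f t| := by
        rw [habs0]; ring
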